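/- If A is a nonnegative tensor of order m and dimension n that has a positive eigenvector x (i.e., A x^{m-1} = λ x^{[m-1]} with x > 0), then λ = ρ(A), and A is either the zero tensor or strictly nonnegative. -/

import Mathlib

open Finset

noncomputable section

/-- `(A x^{m-1})_i` for a tensor of order `m'+1` and dimension `n`. -/
def tApply {n m' : ℕ} (A : Fin n → (Fin m' → Fin n) → ℝ) (x : Fin n → ℝ) (i : Fin n) : ℝ :=
  ∑ idx : Fin m' → Fin n, A i idx * ∏ k, x (idx k)

/-- Complex version of `tApply`. -/
def tApplyC {n m' : ℕ} (A : Fin n → (Fin m' → Fin n) → ℝ) (x : Fin n → ℂ) (i : Fin n) : ℂ :=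
  ∑ idx : Fin m' → Fin n, (A i idx : ℂ) * ∏ k, x (idx k)

/-- `lam` is an eigenvalue of the tensor `A`. -/
def IsEig {n m' : ℕ} (A : Fin n → (Fin m' → Fin n) → ℝ) (lam : ℂ) : Prop :=
  ∃ x : Fin n → ℂ, x ≠ 0 ∧ ∀ i, tApplyC A x i = lam * x i ^ m'

/-- The spectral radius of a tensor. -/
def specRad {n m' : ℕ} (A : Fin n → (Fin m' → Fin n) → ℝ) : ℝ :=
  sSup {r | ∃ lam, IsEig A lam ∧ r = ‖lam‖}

/-- The majorization matrix `M_A` of a tensor `A`. -/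
def major {n m' : ℕ} (A : Fin n → (Fin m' → Fin n) → ℝ) (i j : Fin n) : ℝ :=
  ∑ idx ∈ univ.filter (fun idx : Fin m' → Fin n => ∃ k, idx k = j), A i idx

/-- The majorization matrix of the principal sub-tensor `A_I`. -/
def subMajor {n m' : ℕ} (A : Fin n → (Fin m' → Fin n) → ℝ) (I : Finset (Fin n))
    (i j : Fin n) : ℝ :=
  ∑ idx ∈ univ.filter (fun idx : Fin m' → Fin n => (∃ k, idx k = j) ∧ ∀ k, idx k ∈ I),
    A i idx

/-- Irreducibility of (the principal submatrix on `I` of) a nonnegative matrix. -/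
def MatIrredOn {n : ℕ} (M : Fin n → Fin n → ℝ) (I : Finset (Fin n)) : Prop :=
  ∀ S ⊆ I, S.Nonempty → S ≠ I → ∃ i ∈ S, ∃ j ∈ I \ S, M i j ≠ 0

/-- A tensor is weakly irreducible if its majorization matrix is irreducible. -/
def WeaklyIrred {n m' : ℕ} (A : Fin n → (Fin m' → Fin n) → ℝ) : Prop :=
  MatIrredOn (major A) Finset.univ

/-- Weak irreducibility of the principal sub-tensor `A_I`. -/
def WeaklyIrredOn {n m' : ℕ} (A : Fin n → (Fin m' → Fin n) → ℝ) (I : Finset (Fin n)) : Prop :=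
  MatIrredOn (subMajor A I) I

/-- `(A_I e_I^{m-1})_i`, the action of the principal sub-tensor on the all-ones vector. -/
def subApplyOnes {n m' : ℕ} (A : Fin n → (Fin m' → Fin n) → ℝ) (I : Finset (Fin n))
    (i : Fin n) : ℝ :=
  ∑ idx ∈ univ.filter (fun idx : Fin m' → Fin n => ∀ k, idx k ∈ I), A i idx

/-- The spectral radius of the principal sub-tensor `A_I`. -/
def subSpecRad {n m' : ℕ} (A : Fin n → (Fin m' → Fin n) → ℝ) (I : Finset (Fin n)) : ℝ :=
  sSup {r | ∃ lam : ℂ, ∃ x : Fin n → ℂ, (∃ i ∈ I, x i ≠ 0) ∧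
    (∀ i ∈ I, (∑ idx ∈ univ.filter (fun idx : Fin m' → Fin n => ∀ k, idx k ∈ I),
      (A i idx : ℂ) * ∏ k, x (idx k)) = lam * x i ^ m') ∧ r = ‖lam‖}

/-- a positive eigenvector is a Perron vector; the tensor is zero or
strictly nonnegative. -/
theorem positive_eigenvector_is_perron {n m' : ℕ} (hm : 1 ≤ m') (hn : 1 ≤ n)
    (A : Fin n → (Fin m' → Fin n) → ℝ)
    (hA : ∀ i idx, 0 ≤ A i idx)
    (lam : ℝ) (x : Fin n → ℝ) (hx : ∀ i, 0 < x i)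
    (heig : ∀ i, tApply A x i = lam * x i ^ m') :
    lam = specRad A ∧
      (A = 0 ∨ ∀ i, 0 < tApply A (fun _ => (1 : ℝ)) i) := by
  have i0' : Fin n := ⟨0, hn⟩
  have hApp_nonneg : ∀ i, 0 ≤ tApply A x i := fun i =>
    Finset.sum_nonneg fun idx _ =>
      mul_nonneg (hA i idx) (Finset.prod_nonneg fun k _ => (hx _).le)
  have hlam0 : 0 ≤ lam := by
    have h1 := hApp_nonneg i0'
    rw [heig i0'] at h1
    nlinarith [pow_pos (hx i0') m']
  -- λ is an eigenvalue
  have heigR : IsEig A (lam : ℂ) := by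
    refine ⟨fun i => (x i : ℂ), ?_, ?_⟩
    · intro h
      have := congrFun h i0'
      simp only [Pi.zero_apply, Complex.ofReal_eq_zero] at this
      exact (hx i0').ne' this
    · intro i
      have h := heig i
      have : tApplyC A (fun i => (x i : ℂ)) i = ((tApply A x i : ℝ) : ℂ) := by
        simp only [tApplyC, tApply]
        push_cast
        rfl
      rw [this, h]
      push_cast
      ring
  -- every eigenvalue has modulus ≤ λ
  have key : ∀ mu : ℂ, IsEig A mu → ‖mu‖ ≤ lam := by
    rintro mu ⟨y, hy0, hy⟩
    obtain ⟨i0, -, hi0⟩ := Finset.exists_max_image Finset.univ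
      (fun i => ‖y i‖ / x i) ⟨i0', Finset.mem_univ _⟩
    set t := ‖y i0‖ / x i0 with ht
    have hbound : ∀ j, ‖y j‖ ≤ t * x j := fun j => by
      have h := hi0 j (Finset.mem_univ j)
      have hxj := hx j
      calc ‖y j‖ = (‖y j‖ / x j) * x j := by field_simp
        _ ≤ t * x j := mul_le_mul_of_nonneg_right h hxj.le
    have ht0 : 0 < t := by
      obtain ⟨j, hj⟩ := Function.ne_iff.mp hy0
      have hj' : (0:ℝ) < ‖y j‖ := by
        simpa [norm_pos_iff] using hj
      exact lt_of_lt_of_le (div_pos hj' (hx j)) (hi0 j (Finset.mem_univ j))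
    have hyi0 : ‖y i0‖ = t * x i0 :=
      (div_mul_cancel₀ _ (hx i0).ne').symm
    have h1 : ‖mu‖ * (t ^ m' * x i0 ^ m') ≤ lam * (t ^ m' * x i0 ^ m') := by
      calc ‖mu‖ * (t ^ m' * x i0 ^ m')
          = ‖mu‖ * (t * x i0) ^ m' := by ring
        _ = ‖mu * y i0 ^ m'‖ := by
            rw [norm_mul, norm_pow, hyi0]
        _ = ‖tApplyC A y i0‖ := by rw [hy i0]
        _ ≤ ∑ idx : Fin m' → Fin n, A i0 idx * ∏ k, ‖y (idx k)‖ := by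
            refine le_trans (norm_sum_le _ _) (Finset.sum_le_sum fun idx _ => ?_)
            rw [norm_mul, norm_prod, Complex.norm_real, Real.norm_eq_abs, abs_of_nonneg (hA i0 idx)]
        _ ≤ ∑ idx : Fin m' → Fin n, A i0 idx * ∏ k, (t * x (idx k)) := by
            refine Finset.sum_le_sum fun idx _ => ?_
            refine mul_le_mul_of_nonneg_left ?_ (hA i0 idx)
            exact Finset.prod_le_prod (fun k _ => (norm_nonneg _))
              (fun k _ => hbound (idx k))
        _ = t ^ m' * tApply A x i0 := by
            simp only [tApply, Finset.mul_sum, Finset.prod_mul_distrib,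
              Finset.prod_const, Finset.card_univ, Fintype.card_fin]
            exact Finset.sum_congr rfl fun idx _ => by ring
        _ = lam * (t ^ m' * x i0 ^ m') := by rw [heig i0]; ring
    have hpos : 0 < t ^ m' * x i0 ^ m' :=
      mul_pos (pow_pos ht0 m') (pow_pos (hx i0) m')
    exact le_of_mul_le_mul_right (by linarith) hpos
  have hmem : lam ∈ {r | ∃ mu, IsEig A mu ∧ r = ‖mu‖} :=
    ⟨(lam : ℂ), heigR, by rw [Complex.norm_real, Real.norm_eq_abs, abs_of_nonneg hlam0]⟩
  have hub : ∀ r ∈ {r | ∃ mu, IsEig A mu ∧ r = ‖mu‖}, r ≤ lam := by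
    rintro r ⟨mu, hmu, rfl⟩
    exact key mu hmu
  constructor
  · exact le_antisymm (le_csSup ⟨lam, hub⟩ hmem) (csSup_le ⟨lam, hmem⟩ hub)
  · by_cases hz : A = 0
    · exact Or.inl hz
    · right
      have hlpos : 0 < lam := by
        rcases hlam0.lt_or_eq with h | h0
        · exact h
        · exfalso
          apply hz
          funext i idx
          have h := heig i
          rw [← h0, zero_mul] at h
          have h2 := (Finset.sum_eq_zero_iff_of_nonneg fun idx _ =>
            mul_nonneg (hA i idx) (Finset.prod_nonneg fun k _ => (hx _).le)).mp h
            idx (Finset.mem_univ _)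
          have hprod : 0 < ∏ k, x (idx k) := Finset.prod_pos fun k _ => hx _
          have : A i idx = 0 := by
            by_contra hne
            exact hne (by nlinarith [lt_of_le_of_ne (hA i idx) (Ne.symm hne)])
          simpa using this
      intro i
      have hApos : 0 < tApply A x i := by
        rw [heig i]
        exact mul_pos hlpos (pow_pos (hx i) m')
      have hex : ∃ idx : Fin m' → Fin n, 0 < A i idx := by
        by_contra hc
        push_neg at hc
        have : tApply A x i = 0 := Finset.sum_eq_zero fun idx _ => by
          have : A i idx = 0 := le_antisymm (hc idx) (hA i idx)
          simp [this]
        linarith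
      obtain ⟨idx0, hidx0⟩ := hex
      have : 0 < ∑ idx : Fin m' → Fin n, A i idx :=
        Finset.sum_pos' (fun idx _ => hA i idx) ⟨idx0, Finset.mem_univ _, hidx0⟩
      simpa [tApply] using this
end
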